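/- For Re(μ) > 0, Re(ζ) > 0, Re(κ) > 0, Re(ρ) > 0, the double Riemann–Liouville fractional integral (I^ζ in Y from B, composed with I^μ in X from A) applied to (X−A)^{κ−1}(Y−B)^{ρ−1} E_{κ,ρ,Υ}^{(γ₁;γ₂;γ₃;γ₄)}(ϖ₁(X−A), ϖ₂(Y−B)) equals (X−A)^{κ+μ−1}(Y−B)^{ρ+ζ−1} E_{κ+μ,ρ+ζ,Υ}^{(γ₁;γ₂;γ₃;γ₄)}(ϖ₁(X−A), ϖ₂(Y−B)). -/

import Mathlib

set_option maxHeartbeats 1000000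

open MeasureTheory

/-- The Pochhammer (rising factorial) symbol. -/
noncomputable def poch (a : ℂ) (k : ℕ) : ℂ := ∏ i ∈ Finset.range k, (a + i)

/-- The modified bivariate Hermite–Konhauser Mittag-Leffler function
`E_{κ,ρ,Υ}^{(γ₁;γ₂;γ₃;γ₄)}(X,Y)`. -/
noncomputable def mlE4 (κ ρ : ℂ) (Υ : ℕ) (γ1 γ2 γ3 γ4 X Y : ℂ) : ℂ :=
  ∑' s : ℕ, ∑' r : ℕ,
    poch γ1 (2 * s) * poch γ2 (s + r) * X ^ s * Y ^ (Υ * r) /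
      (poch γ3 s * poch γ4 s * Complex.Gamma (κ + s) * Complex.Gamma (ρ + (Υ : ℂ) * r) *
        (r.factorial : ℂ) * (s.factorial : ℂ))



lemma poch_zero (a : ℂ) : poch a 0 = 1 := by simp [poch]

lemma poch_succ (a : ℂ) (n : ℕ) : poch a (n+1) = poch a n * (a + n) := by
  simp [poch, Finset.prod_range_succ]

lemma Gamma_add_nat {a : ℂ} (ha : 0 < a.re) (n : ℕ) :
    Complex.Gamma (a + n) = Complex.Gamma a * poch a n := by
  induction n with
  | zero => simp [poch_zero]
  | succ n ih =>
      have hne : a + n ≠ 0 := by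
        intro h
        have : (a + n).re = 0 := by rw [h]; simp
        simp [Complex.add_re] at this
        nlinarith [this, Nat.cast_nonneg (α:=ℝ) n, ha]
      have : (a : ℂ) + (n+1 : ℕ) = (a + n) + 1 := by push_cast; ring
      rw [this, Complex.Gamma_add_one _ hne, ih, poch_succ]; ring

lemma Gamma_nat_ne_zero {a : ℂ} (ha : 0 < a.re) (n : ℕ) :
    Complex.Gamma (a + n) ≠ 0 := by
  apply Complex.Gamma_ne_zero
  intro m h
  have : (a + (n:ℂ)).re = (-(m:ℂ)).re := by rw [h]
  simp [Complex.add_re] at this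
  nlinarith [this, Nat.cast_nonneg (α:=ℝ) n, Nat.cast_nonneg (α:=ℝ) m, ha]

/-- The shifted beta integral. -/
lemma beta_shift {a b : ℂ} (ha : 0 < a.re) (hb : 0 < b.re) {T : ℝ} (hT : 0 < T) :
    ∫ t in (0:ℝ)..T, ((t:ℝ):ℂ) ^ (a - 1) * ((T - t : ℝ):ℂ) ^ (b - 1)
      = Complex.Gamma a * Complex.Gamma b / Complex.Gamma (a+b) * ((T:ℝ):ℂ) ^ (a + b - 1) := by
  have h1 := Complex.betaIntegral_scaled a b hT
  have h2 := Complex.Gamma_mul_Gamma_eq_betaIntegral ha hb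
  have hab : Complex.Gamma (a+b) ≠ 0 := by
    apply Complex.Gamma_ne_zero
    intro m h
    have : (a+b).re = (-(m:ℂ)).re := by rw [h]
    simp [Complex.add_re] at this
    nlinarith [Nat.cast_nonneg (α:=ℝ) m]
  have : ∫ t in (0:ℝ)..T, ((t:ℝ):ℂ) ^ (a - 1) * ((T - t : ℝ):ℂ) ^ (b - 1)
      = ∫ t in (0:ℝ)..T, (t:ℂ) ^ (a - 1) * ((T:ℂ) - t) ^ (b - 1) := by
    congr 1; ext t; push_cast; ring_nf
  rw [this, h1]
  have hβ : a.betaIntegral b = Complex.Gamma a * Complex.Gamma b / Complex.Gamma (a+b) := by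
    field_simp [h2]
    rw [h2]; ring
  rw [hβ]; ring


lemma prod_succ_eq_factorial (n : ℕ) : ∏ i ∈ Finset.range n, ((i:ℝ)+1) = n.factorial := by
  induction n with
  | zero => simp
  | succ n ih => rw [Finset.prod_range_succ, ih, Nat.factorial_succ]; push_cast; ring

lemma poch_norm_le (γ : ℂ) (n : ℕ) : ‖poch γ n‖ ≤ (‖γ‖+1)^n * n.factorial := by
  have h : ‖poch γ n‖ ≤ ∏ i ∈ Finset.range n, ((‖γ‖+1) * (i+1)) := by
    rw [poch, norm_prod]
    apply Finset.prod_le_prod (fun i _ => norm_nonneg _)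
    intro i _
    calc ‖γ + (i:ℂ)‖ ≤ ‖γ‖ + (i:ℕ) := by
          simpa using norm_add_le γ (i:ℂ)
      _ ≤ (‖γ‖+1) * (i+1) := by nlinarith [norm_nonneg γ, Nat.cast_nonneg (α:=ℝ) i]
  refine h.trans_eq ?_
  rw [Finset.prod_mul_distrib, Finset.prod_const, Finset.card_range, prod_succ_eq_factorial]

lemma poch_norm_ge {a : ℂ} (ha : 0 < a.re) (n : ℕ) :
    (min a.re 1)^n * n.factorial ≤ ‖poch a n‖ := by
  have h : ∏ i ∈ Finset.range n, (min a.re 1 * (i+1)) ≤ ‖poch a n‖ := by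
    rw [poch, norm_prod]
    apply Finset.prod_le_prod
    · intro i _; positivity
    · intro i _
      have h1 : min a.re 1 ≤ a.re := min_le_left _ _
      have h2 : min a.re 1 ≤ 1 := min_le_right _ _
      calc min a.re 1 * (i+1) ≤ a.re + i := by nlinarith [Nat.cast_nonneg (α:=ℝ) i]
        _ = (a + (i:ℂ)).re := by simp [Complex.add_re]
        _ ≤ ‖a + (i:ℂ)‖ := Complex.re_le_norm _
  refine le_trans (le_of_eq ?_) h
  rw [Finset.prod_mul_distrib, Finset.prod_const, Finset.card_range, prod_succ_eq_factorial]

lemma poch_lower (γ : ℂ) : ∃ c > 0, ∀ s : ℕ, poch γ s ≠ 0 →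
    c * (2⁻¹)^s * s.factorial ≤ ‖poch γ s‖ := by
  set N : ℕ := ⌈2*‖γ‖⌉₊ + 1 with hN
  set q : ℕ → ℝ := fun i => if γ + i = 0 then 1 else min (2*‖γ + i‖/(i+1)) 1 with hq
  have hqpos : ∀ i, 0 < q i := by
    intro i
    simp only [hq]
    split
    · norm_num
    · rename_i h
      have h0 : 0 < ‖γ + (i:ℂ)‖ := norm_pos_iff.mpr h
      have : 0 < 2*‖γ + (i:ℂ)‖/(i+1) := by positivity
      exact lt_min this one_pos
  have hqle : ∀ i, q i ≤ 1 := by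
    intro i; simp only [hq]; split
    · exact le_refl 1
    · exact min_le_right _ _
  have hqN : ∀ i, N ≤ i → q i = 1 := by
    intro i hi
    simp only [hq]
    split
    · rfl
    · rename_i h
      have hcl : (2*‖γ‖ : ℝ) ≤ ⌈2*‖γ‖⌉₊ := Nat.le_ceil _
      have hiN : (2*‖γ‖ : ℝ) + 1 ≤ (i:ℝ) := by
        have : ((N:ℕ):ℝ) ≤ (i:ℝ) := by exact_mod_cast hi
        rw [hN] at this; push_cast at this; linarith
      have hnorm : (i:ℝ) - ‖γ‖ ≤ ‖γ + (i:ℂ)‖ := by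
        have h2 := norm_add_le (γ + (i:ℂ)) (-γ)
        have h3 : γ + (i:ℂ) + -γ = (i:ℂ) := by ring
        rw [h3, norm_neg, Complex.norm_natCast] at h2
        linarith
      have : (1:ℝ) ≤ 2*‖γ + (i:ℂ)‖/(i+1) := by
        rw [le_div_iff₀ (by positivity)]
        nlinarith [norm_nonneg γ]
      exact min_eq_right this
  refine ⟨∏ i ∈ Finset.range N, q i, Finset.prod_pos (fun i _ => hqpos i), ?_⟩
  intro s hs
  have hfac : ∀ i < s, γ + (i:ℂ) ≠ 0 := by
    intro i hi h0
    exact hs (Finset.prod_eq_zero (Finset.mem_range.mpr hi) h0)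
  have key : ∀ i ∈ Finset.range s, q i * (2⁻¹ * ((i:ℝ)+1)) ≤ ‖γ + (i:ℂ)‖ := by
    intro i hi
    have hne := hfac i (Finset.mem_range.mp hi)
    simp only [hq, if_neg hne]
    have h1 : min (2*‖γ + (i:ℂ)‖/((i:ℝ)+1)) 1 ≤ 2*‖γ + (i:ℂ)‖/((i:ℝ)+1) := min_le_left _ _
    calc min (2*‖γ + (i:ℂ)‖/((i:ℝ)+1)) 1 * (2⁻¹ * ((i:ℝ)+1))
        ≤ (2*‖γ + (i:ℂ)‖/((i:ℝ)+1)) * (2⁻¹ * ((i:ℝ)+1)) := by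
          apply mul_le_mul_of_nonneg_right h1; positivity
      _ = ‖γ + (i:ℂ)‖ := by field_simp
  have hc : ∏ i ∈ Finset.range N, q i ≤ ∏ i ∈ Finset.range s, q i := by
    rcases le_total s N with h | h
    · rw [← Finset.prod_range_mul_prod_Ico q h]
      have h1 : ∏ i ∈ Finset.Ico s N, q i ≤ 1 :=
        Finset.prod_le_one (fun i _ => (hqpos i).le) (fun i _ => hqle i)
      nlinarith [Finset.prod_pos (fun i (_ : i ∈ Finset.range s) => hqpos i),
        Finset.prod_pos (fun i (_ : i ∈ Finset.Ico s N) => hqpos i)]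
    · rw [← Finset.prod_range_mul_prod_Ico q h]
      have h1 : ∏ i ∈ Finset.Ico N s, q i = 1 :=
        Finset.prod_eq_one (fun i hi => hqN i (Finset.mem_Ico.mp hi).1)
      rw [h1, mul_one]
  calc (∏ i ∈ Finset.range N, q i) * 2⁻¹^s * s.factorial
      ≤ (∏ i ∈ Finset.range s, q i) * 2⁻¹^s * s.factorial := by
        apply mul_le_mul_of_nonneg_right (mul_le_mul_of_nonneg_right hc (by positivity)) (by positivity)
    _ = ∏ i ∈ Finset.range s, (q i * (2⁻¹ * ((i:ℝ)+1))) := by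
        rw [Finset.prod_mul_distrib, Finset.prod_mul_distrib, Finset.prod_const,
          Finset.card_range, prod_succ_eq_factorial]
        ring
    _ ≤ ∏ i ∈ Finset.range s, ‖γ + (i:ℂ)‖ := by
        apply Finset.prod_le_prod (fun i _ => by positivity) key
    _ = ‖poch γ s‖ := (norm_prod _ _).symm


lemma choose_le_two_pow' (n k : ℕ) : n.choose k ≤ 2^n := by
  rcases le_or_gt k n with h|h
  · calc n.choose k ≤ ∑ m ∈ Finset.range (n+1), n.choose m :=
        Finset.single_le_sum (fun i _ => Nat.zero_le _)
          (Finset.mem_range.mpr (Nat.lt_succ_of_le h))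
    _ = 2^n := Nat.sum_range_choose n
  · simp [Nat.choose_eq_zero_of_lt h]

lemma add_factorial_le (s r : ℕ) :
    ((s+r).factorial : ℝ) ≤ 2^(s+r) * s.factorial * r.factorial := by
  have h := Nat.add_choose_mul_factorial_mul_factorial s r
  have h2 : ((s+r).factorial : ℕ) ≤ 2^(s+r) * s.factorial * r.factorial := by
    calc (s+r).factorial = (s+r).choose r * s.factorial * r.factorial := h.symm
      _ ≤ 2^(s+r) * s.factorial * r.factorial := by
          have := choose_le_two_pow' (s+r) r
          exact Nat.mul_le_mul_right _ (Nat.mul_le_mul_right _ this)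
  exact_mod_cast h2

lemma two_mul_factorial_le (s : ℕ) :
    ((2*s).factorial : ℝ) ≤ 4^s * s.factorial^2 := by
  have h := add_factorial_le s s
  have h1 : 2*s = s + s := by ring
  have h2 : (4:ℝ)^s = 2^(s+s) := by rw [← two_mul s]; rw [pow_mul]; norm_num
  rw [h1, h2]
  calc ((s+s).factorial:ℝ) ≤ 2^(s+s) * s.factorial * s.factorial := h
    _ = 2^(s+s) * (s.factorial:ℝ)^2 := by ring


/-- The coefficient of the double series. -/
noncomputable def mlCoef (κ ρ : ℂ) (Υ : ℕ) (γ1 γ2 γ3 γ4 : ℂ) (p : ℕ × ℕ) : ℂ :=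
  poch γ1 (2*p.1) * poch γ2 (p.1+p.2) /
    (poch γ3 p.1 * poch γ4 p.1 * Complex.Gamma (κ + p.1) *
      Complex.Gamma (ρ + (Υ:ℂ) * p.2) * (p.2.factorial : ℂ) * (p.1.factorial : ℂ))

lemma Gamma_norm_ge {a : ℂ} (ha : 0 < a.re) (n : ℕ) :
    ‖Complex.Gamma a‖ * ((min a.re 1)^n * n.factorial) ≤ ‖Complex.Gamma (a + n)‖ := by
  rw [Gamma_add_nat ha, norm_mul]
  exact mul_le_mul_of_nonneg_left (poch_norm_ge ha n) (norm_nonneg _)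

lemma mlCoef_summable (κ ρ : ℂ) (Υ : ℕ) (hΥ : 0 < Υ) (γ1 γ2 γ3 γ4 : ℂ)
    (hκ : 0 < κ.re) (hρ : 0 < ρ.re) (x y : ℝ) (hx : 0 ≤ x) (hy : 0 ≤ y) :
    Summable (fun p : ℕ × ℕ => ‖mlCoef κ ρ Υ γ1 γ2 γ3 γ4 p‖ * x^p.1 * y^p.2) := by
  obtain ⟨c3, hc3, hp3⟩ := poch_lower γ3
  obtain ⟨c4, hc4, hp4⟩ := poch_lower γ4
  set K1 : ℝ := ‖γ1‖ + 1 with hK1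
  set K2 : ℝ := ‖γ2‖ + 1 with hK2
  set e1 : ℝ := min κ.re 1 with he1
  set e2 : ℝ := min ρ.re 1 with he2
  set Gκ : ℝ := ‖Complex.Gamma κ‖ with hGκ
  set Gρ : ℝ := ‖Complex.Gamma ρ‖ with hGρ
  have hK1p : 0 < K1 := by positivity
  have hK2p : 0 < K2 := by positivity
  have he1p : 0 < e1 := lt_min hκ one_pos
  have he2p : 0 < e2 := lt_min hρ one_pos
  have hGκp : 0 < Gκ := by
    rw [hGκ]
    refine norm_pos_iff.mpr ?_
    simpa using Gamma_nat_ne_zero hκ 0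
  have hGρp : 0 < Gρ := by
    rw [hGρ]
    refine norm_pos_iff.mpr ?_
    simpa using Gamma_nat_ne_zero hρ 0
  -- the separated majorant
  set U : ℕ → ℝ := fun s => (c3*c4*Gκ)⁻¹ * ((x * (K1^2 * 4 * K2 * 2 * 4) / e1)^s / s.factorial)
    with hU
  set V : ℕ → ℝ := fun r => Gρ⁻¹ * ((y * (K2 * 2) / e2^Υ)^r / r.factorial) with hV
  have hUs : Summable U := (Real.summable_pow_div_factorial _).mul_left _
  have hVs : Summable V := (Real.summable_pow_div_factorial _).mul_left _
  clear_value K1 K2 e1 e2 Gκ Gρ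
  apply Summable.of_nonneg_of_le (f := fun p : ℕ × ℕ => U p.1 * V p.2)
    (fun p => by positivity) _
    (hUs.mul_of_nonneg hVs (fun s => by positivity) (fun r => by positivity))
  rintro ⟨s, r⟩
  show ‖mlCoef κ ρ Υ γ1 γ2 γ3 γ4 (s,r)‖ * x^s * y^r ≤ U s * V r
  by_cases h34 : poch γ3 s = 0 ∨ poch γ4 s = 0
  · have : mlCoef κ ρ Υ γ1 γ2 γ3 γ4 (s,r) = 0 := by
      rcases h34 with h | h <;>
        simp [mlCoef, h]
    rw [this]
    simp only [norm_zero, zero_mul]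
    positivity
  push_neg at h34
  obtain ⟨h3, h4⟩ := h34
  have hb3 := hp3 s h3
  have hb4 := hp4 s h4
  have hbκ := Gamma_norm_ge hκ s
  rw [← hGκ, ← he1] at hbκ
  have hbρ : Gρ * ((e2^Υ)^r * r.factorial) ≤ ‖Complex.Gamma (ρ + (Υ:ℂ) * r)‖ := by
    have h0 := Gamma_norm_ge hρ (Υ * r)
    have hcast : ((Υ * r : ℕ) : ℂ) = (Υ:ℂ) * r := by push_cast; ring
    rw [hcast, ← hGρ, ← he2] at h0
    refine le_trans ?_ h0
    rw [← pow_mul]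
    have hle : (r.factorial : ℝ) ≤ ((Υ*r).factorial : ℝ) := by
      exact_mod_cast Nat.factorial_le (Nat.le_mul_of_pos_left r hΥ)
    have he2r : (0:ℝ) ≤ e2 ^ (Υ*r) := by positivity
    exact mul_le_mul_of_nonneg_left (mul_le_mul_of_nonneg_left hle he2r) hGρp.le
  -- numerator bound
  have hnum : ‖poch γ1 (2*s) * poch γ2 (s+r)‖
      ≤ (K1^(2*s) * (4^s * (s.factorial:ℝ)^2)) * (K2^(s+r) * (2^(s+r) * s.factorial * r.factorial)) := by
    rw [norm_mul]
    have h1 : ‖poch γ1 (2*s)‖ ≤ K1^(2*s) * (4^s * (s.factorial:ℝ)^2) := by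
      refine (poch_norm_le γ1 (2*s)).trans ?_
      rw [hK1]
      exact mul_le_mul_of_nonneg_left (two_mul_factorial_le s) (by positivity)
    have h2 : ‖poch γ2 (s+r)‖ ≤ K2^(s+r) * (2^(s+r) * s.factorial * r.factorial) := by
      refine (poch_norm_le γ2 (s+r)).trans ?_
      rw [hK2]
      exact mul_le_mul_of_nonneg_left (add_factorial_le s r) (by positivity)
    exact mul_le_mul h1 h2 (norm_nonneg _) (by positivity)
  -- denominator bound
  have hsf : (0:ℝ) < s.factorial := by positivity
  have hrf : (0:ℝ) < r.factorial := by positivity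
  have hden : (c3 * 2⁻¹^s * s.factorial) * (c4 * 2⁻¹^s * s.factorial)
        * (Gκ * (e1^s * s.factorial)) * (Gρ * ((e2^Υ)^r * r.factorial))
        * (r.factorial:ℝ) * (s.factorial:ℝ)
      ≤ ‖poch γ3 s * poch γ4 s * Complex.Gamma (κ + s) *
          Complex.Gamma (ρ + (Υ:ℂ) * r) * (r.factorial:ℂ) * (s.factorial:ℂ)‖ := by
    rw [norm_mul, norm_mul, norm_mul, norm_mul, norm_mul]
    have hnr : ‖(r.factorial:ℂ)‖ = (r.factorial:ℝ) := by
      rw [Complex.norm_natCast]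
    have hns : ‖(s.factorial:ℂ)‖ = (s.factorial:ℝ) := by
      rw [Complex.norm_natCast]
    rw [hnr, hns]
    gcongr <;> positivity
  have hdenpos : (0:ℝ) < (c3 * 2⁻¹^s * s.factorial) * (c4 * 2⁻¹^s * s.factorial)
        * (Gκ * (e1^s * s.factorial)) * (Gρ * ((e2^Υ)^r * r.factorial))
        * (r.factorial:ℝ) * (s.factorial:ℝ) := by positivity
  have hM : ‖mlCoef κ ρ Υ γ1 γ2 γ3 γ4 (s,r)‖ * x^s * y^r
      = ‖poch γ1 (2*s) * poch γ2 (s+r)‖ * x^s * y^r /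
        ‖poch γ3 s * poch γ4 s * Complex.Gamma (κ + s) *
          Complex.Gamma (ρ + (Υ:ℂ) * r) * (r.factorial:ℂ) * (s.factorial:ℂ)‖ := by
    rw [mlCoef, norm_div]
    ring
  rw [hM]
  have step : ‖poch γ1 (2*s) * poch γ2 (s+r)‖ * x^s * y^r /
        ‖poch γ3 s * poch γ4 s * Complex.Gamma (κ + s) *
          Complex.Gamma (ρ + (Υ:ℂ) * r) * (r.factorial:ℂ) * (s.factorial:ℂ)‖
      ≤ ((K1^(2*s) * (4^s * (s.factorial:ℝ)^2)) * (K2^(s+r) * (2^(s+r) * s.factorial * r.factorial))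
          * x^s * y^r) /
        ((c3 * 2⁻¹^s * s.factorial) * (c4 * 2⁻¹^s * s.factorial)
          * (Gκ * (e1^s * s.factorial)) * (Gρ * ((e2^Υ)^r * r.factorial))
          * (r.factorial:ℝ) * (s.factorial:ℝ)) := by
    apply div_le_div₀ (by positivity) _ hdenpos hden
    have hxs : (0:ℝ) ≤ x^s := by positivity
    have hys : (0:ℝ) ≤ y^r := by positivity
    exact mul_le_mul_of_nonneg_right (mul_le_mul_of_nonneg_right hnum hxs) hys
  refine step.trans (le_of_eq ?_)
  rw [hU, hV]
  rw [div_eq_iff (by positivity)]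
  field_simp [hc3.ne', hc4.ne', hGκp.ne', hGρp.ne', he1p.ne', he2p.ne', hsf.ne', hrf.ne']
  ring_nf
  rw [show ((4:ℝ))^s = 2^(2*s) by rw [pow_mul]; norm_num,
      show ((32:ℝ))^s = 2^(5*s) by rw [show (32:ℝ) = 2^5 by norm_num, ← pow_mul]]
  simp only [inv_pow]
  field_simp
  ring_nf
  rw [one_div, inv_pow, show (2:ℝ)^(s*5) = 2^(s*2) * 2^(s*3) by rw [← pow_add]; ring_nf]
  rw [mul_assoc _ ((2:ℝ)^(s*2))⁻¹, inv_mul_cancel_left₀ (by positivity)]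


lemma mlTerm_summable (κ ρ : ℂ) (Υ : ℕ) (hΥ : 0 < Υ) (γ1 γ2 γ3 γ4 : ℂ)
    (hκ : 0 < κ.re) (hρ : 0 < ρ.re) (X Y : ℂ) :
    Summable (fun p : ℕ × ℕ => mlCoef κ ρ Υ γ1 γ2 γ3 γ4 p * X^p.1 * Y^(Υ*p.2)) := by
  apply Summable.of_norm
  refine Summable.of_nonneg_of_le (fun p => norm_nonneg _) ?_
    (mlCoef_summable κ ρ Υ hΥ γ1 γ2 γ3 γ4 hκ hρ ‖X‖ (‖Y‖^Υ) (by positivity) (by positivity))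
  rintro ⟨s, r⟩
  apply le_of_eq
  rw [norm_mul, norm_mul, norm_pow, norm_pow, ← pow_mul]

lemma mlE4_eq_tsum (κ ρ : ℂ) (Υ : ℕ) (hΥ : 0 < Υ) (γ1 γ2 γ3 γ4 : ℂ)
    (hκ : 0 < κ.re) (hρ : 0 < ρ.re) (X Y : ℂ) :
    mlE4 κ ρ Υ γ1 γ2 γ3 γ4 X Y
      = ∑' p : ℕ × ℕ, mlCoef κ ρ Υ γ1 γ2 γ3 γ4 p * X^p.1 * Y^(Υ*p.2) := by
  rw [mlE4, Summable.tsum_prod (mlTerm_summable κ ρ Υ hΥ γ1 γ2 γ3 γ4 hκ hρ X Y)]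
  congr 1; ext s; congr 1; ext r
  rw [mlCoef]
  ring

/-- cancellation lemma: shifting the first Gamma parameter -/
lemma mlCoef_shift_fst (κ ρ μ : ℂ) (Υ : ℕ) (γ1 γ2 γ3 γ4 : ℂ)
    (hκ : 0 < κ.re) (hρ : 0 < ρ.re) (hκμ : 0 < (κ+μ).re) (p : ℕ × ℕ) :
    mlCoef κ ρ Υ γ1 γ2 γ3 γ4 p * (Complex.Gamma (κ + p.1) / Complex.Gamma (κ + μ + p.1))
      = mlCoef (κ+μ) ρ Υ γ1 γ2 γ3 γ4 p := by
  have h1 : Complex.Gamma (κ + p.1) ≠ 0 := Gamma_nat_ne_zero hκ p.1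
  have h2 : Complex.Gamma (κ + μ + p.1) ≠ 0 := Gamma_nat_ne_zero hκμ p.1
  have h3 : Complex.Gamma (ρ + (Υ:ℂ) * p.2) ≠ 0 := by
    have := Gamma_nat_ne_zero hρ (Υ * p.2)
    rwa [Nat.cast_mul] at this
  have hr : ((p.2.factorial : ℂ)) ≠ 0 := Nat.cast_ne_zero.mpr p.2.factorial_ne_zero
  have hs : ((p.1.factorial : ℂ)) ≠ 0 := Nat.cast_ne_zero.mpr p.1.factorial_ne_zero
  rw [mlCoef, mlCoef]
  by_cases h34 : poch γ3 p.1 = 0 ∨ poch γ4 p.1 = 0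
  · rcases h34 with h | h <;> simp [h]
  push_neg at h34
  field_simp

lemma mlCoef_shift_snd (κ ρ ζ : ℂ) (Υ : ℕ) (γ1 γ2 γ3 γ4 : ℂ)
    (hκ : 0 < κ.re) (hρ : 0 < ρ.re) (hρζ : 0 < (ρ+ζ).re) (p : ℕ × ℕ) :
    mlCoef κ ρ Υ γ1 γ2 γ3 γ4 p *
        (Complex.Gamma (ρ + (Υ:ℂ) * p.2) / Complex.Gamma (ρ + ζ + (Υ:ℂ) * p.2))
      = mlCoef κ (ρ+ζ) Υ γ1 γ2 γ3 γ4 p := by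
  have h1 : Complex.Gamma (κ + p.1) ≠ 0 := Gamma_nat_ne_zero hκ p.1
  have h2 : Complex.Gamma (ρ + (Υ:ℂ) * p.2) ≠ 0 := by
    have := Gamma_nat_ne_zero hρ (Υ * p.2); rwa [Nat.cast_mul] at this
  have h3 : Complex.Gamma (ρ + ζ + (Υ:ℂ) * p.2) ≠ 0 := by
    have := Gamma_nat_ne_zero hρζ (Υ * p.2); rwa [Nat.cast_mul] at this
  have hr : ((p.2.factorial : ℂ)) ≠ 0 := Nat.cast_ne_zero.mpr p.2.factorial_ne_zero
  have hs : ((p.1.factorial : ℂ)) ≠ 0 := Nat.cast_ne_zero.mpr p.1.factorial_ne_zero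
  rw [mlCoef, mlCoef]
  by_cases h34 : poch γ3 p.1 = 0 ∨ poch γ4 p.1 = 0
  · rcases h34 with h | h <;> simp [h]
  push_neg at h34
  field_simp

/-- convergence of the scaled beta integrand -/
lemma beta_convergent {a b : ℂ} (ha : 0 < a.re) (hb : 0 < b.re) {W : ℝ} (hW : 0 < W) :
    IntervalIntegrable (fun t : ℝ => (t:ℂ)^(a-1) * (((W:ℝ):ℂ) - t)^(b-1)) volume 0 W := by
  have half : ∀ (u v : ℂ), 0 < u.re → IntervalIntegrable
      (fun t : ℝ => (t:ℂ)^(u-1) * (((W:ℝ):ℂ) - t)^(v-1)) volume 0 (W/2) := by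
    intro u v hu
    apply IntervalIntegrable.mul_continuousOn
    · refine intervalIntegral.intervalIntegrable_cpow' ?_
      rwa [Complex.sub_re, Complex.one_re, ← zero_sub, sub_lt_sub_iff_right]
    · apply continuousOn_of_forall_continuousAt
      intro x hx
      rw [Set.uIcc_of_le (by positivity : (0 : ℝ) ≤ W / 2)] at hx
      apply ContinuousAt.cpow
      · exact (continuous_const.sub Complex.continuous_ofReal).continuousAt
      · exact continuousAt_const
      · have : (0:ℝ) < W - x := by
          have := hx.2; linarith
        rw [show ((W:ℝ):ℂ) - (x:ℂ) = ((W - x : ℝ) : ℂ) by push_cast; ring]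
        exact Complex.ofReal_mem_slitPlane.2 this
  refine (half a b ha).trans ?_
  rw [IntervalIntegrable.iff_comp_neg]
  have h2 := (half b a hb).comp_add_right W
  have : W/2 - W = -(W/2) := by ring
  convert h2.symm using 1
  · ext1 x
    conv_lhs => rw [mul_comm]
    congr 2 <;> · push_cast; ring
  · ring
  · ring



lemma beta_shift_Ioo {a b : ℂ} (ha : 0 < a.re) (hb : 0 < b.re) {T : ℝ} (hT : 0 < T) :
    ∫ t in Set.Ioo (0:ℝ) T, ((t:ℝ):ℂ) ^ (a - 1) * (((T:ℝ):ℂ) - t) ^ (b - 1)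
      = Complex.Gamma a * Complex.Gamma b / Complex.Gamma (a+b) * ((T:ℝ):ℂ) ^ (a + b - 1) := by
  have h := beta_shift ha hb hT
  rw [intervalIntegral.integral_of_le hT.le, MeasureTheory.integral_Ioc_eq_integral_Ioo] at h
  rw [← h]
  refine setIntegral_congr_fun measurableSet_Ioo (fun t ht => ?_)
  congr 1
  push_cast
  ring_nf

lemma beta_integrableOn {a b : ℂ} (ha : 0 < a.re) (hb : 0 < b.re) {W : ℝ} (hW : 0 < W) :
    IntegrableOn (fun t : ℝ => (t:ℂ)^(a-1) * (((W:ℝ):ℂ) - t)^(b-1)) (Set.Ioo 0 W) volume := by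
  have h := beta_convergent ha hb hW
  rw [intervalIntegrable_iff_integrableOn_Ioc_of_le hW.le] at h
  exact h.mono_set Set.Ioo_subset_Ioc_self

/-- real version: integrability of the beta weight -/
lemma beta_integrableOn_real {a b : ℝ} (ha : 0 < a) (hb : 0 < b) {W : ℝ} (hW : 0 < W) :
    IntegrableOn (fun t : ℝ => t^(a-1) * (W - t)^(b-1)) (Set.Ioo 0 W) volume := by
  have h : IntegrableOn (fun t : ℝ => ‖(t:ℂ)^((a:ℂ)-1) * (((W:ℝ):ℂ) - t)^((b:ℂ)-1)‖)
      (Set.Ioo 0 W) volume := (beta_integrableOn (a := (a:ℂ)) (b := (b:ℂ))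
    (by simpa using ha) (by simpa using hb) hW).norm
  refine h.congr_fun (fun t ht => ?_) measurableSet_Ioo
  dsimp only
  rw [norm_mul]
  rw [Complex.norm_cpow_eq_rpow_re_of_pos ht.1]
  have h2 : ((W:ℝ):ℂ) - (t:ℂ) = ((W - t : ℝ):ℂ) := by push_cast; ring
  rw [h2, Complex.norm_cpow_eq_rpow_re_of_pos (by linarith [ht.2])]
  simp [Complex.sub_re]

lemma key_swap (α β : ℂ) (hα : 0 < α.re) (hβ : 0 < β.re) {W : ℝ} (hW : 0 < W)
    (n : ℕ × ℕ → ℕ) (c : ℕ × ℕ → ℂ)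
    (hsum : Summable (fun p : ℕ × ℕ => ‖c p‖ * W ^ n p)) :
    ∫ t in Set.Ioo (0:ℝ) W,
        (∑' p : ℕ × ℕ, c p * (t:ℂ)^(n p)) * ((t:ℂ)^(α-1) * (((W:ℝ):ℂ) - t)^(β-1))
      = ∑' p : ℕ × ℕ, c p * ((W:ℝ):ℂ)^(n p) *
          (Complex.Gamma (α + n p) * Complex.Gamma β / Complex.Gamma (α + β + n p) *
            ((W:ℝ):ℂ)^(α + β - 1)) := by
  set F : ℕ × ℕ → ℝ → ℂ :=
    fun p t => (c p * (t:ℂ)^(n p)) * ((t:ℂ)^(α-1) * (((W:ℝ):ℂ) - t)^(β-1)) with hF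
  have hα' : ∀ p : ℕ × ℕ, 0 < (α + (n p : ℂ)).re := by
    intro p
    simp only [Complex.add_re, Complex.natCast_re]
    positivity
  -- pointwise identity on Ioo
  have hpt : ∀ (p : ℕ × ℕ) (t : ℝ), t ∈ Set.Ioo (0:ℝ) W →
      c p * ((t:ℂ)^(α + (n p : ℂ) - 1) * (((W:ℝ):ℂ) - t)^(β-1)) = F p t := by
    intro p t ht
    have hne : (t:ℂ) ≠ 0 := Complex.ofReal_ne_zero.mpr ht.1.ne'
    have he : α + (n p : ℂ) - 1 = (α - 1) + (n p : ℂ) := by ring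
    rw [hF, he, Complex.cpow_add _ _ hne, Complex.cpow_natCast]
    ring
  -- integrability of each term
  have hInt : ∀ p : ℕ × ℕ, IntegrableOn (F p) (Set.Ioo 0 W) volume := by
    intro p
    have h0 := (beta_integrableOn (a := α + (n p : ℂ)) (hα' p) hβ hW).const_mul (c p)
    have h0' : IntegrableOn
        (fun t : ℝ => c p * ((t:ℂ)^(α + (n p : ℂ) - 1) * (((W:ℝ):ℂ) - t)^(β-1)))
        (Set.Ioo 0 W) volume := h0
    exact h0'.congr_fun (fun t ht => hpt p t ht) measurableSet_Ioo
  -- summability of the integrals of norms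
  set CB : ℝ := ∫ t in Set.Ioo (0:ℝ) W, t^(α.re-1) * (W - t)^(β.re-1) with hCB
  have hCBint : IntegrableOn (fun t : ℝ => t^(α.re-1) * (W - t)^(β.re-1))
      (Set.Ioo 0 W) volume := beta_integrableOn_real hα hβ hW
  have hnorm : ∀ (p : ℕ × ℕ) (t : ℝ), t ∈ Set.Ioo (0:ℝ) W →
      ‖F p t‖ = ‖c p‖ * t^(n p) * (t^(α.re-1) * (W - t)^(β.re-1)) := by
    intro p t ht
    have hWt : (0:ℝ) < W - t := by linarith [ht.2]
    have h2 : ((W:ℝ):ℂ) - (t:ℂ) = ((W - t : ℝ):ℂ) := by push_cast; ring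
    have hA : ‖(t:ℂ)^(α-1)‖ = t^(α.re-1) := by
      rw [Complex.norm_cpow_eq_rpow_re_of_pos ht.1, Complex.sub_re,
        Complex.one_re]
    have hB : ‖(((W:ℝ):ℂ) - t)^(β-1)‖ = (W-t)^(β.re-1) := by
      rw [h2, Complex.norm_cpow_eq_rpow_re_of_pos hWt, Complex.sub_re,
        Complex.one_re]
    have hC : ‖(t:ℂ)^(n p)‖ = t^(n p) := by
      rw [norm_pow, Complex.norm_real, Real.norm_of_nonneg ht.1.le]
    rw [hF]
    simp only [norm_mul, hA, hB, hC]
  have hIb : ∀ p : ℕ × ℕ, (∫ t in Set.Ioo (0:ℝ) W, ‖F p t‖) ≤ (‖c p‖ * W^(n p)) * CB := by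
    intro p
    have hle : ∀ t ∈ Set.Ioo (0:ℝ) W,
        ‖F p t‖ ≤ (‖c p‖ * W^(n p)) * (t^(α.re-1) * (W - t)^(β.re-1)) := by
      intro t ht
      rw [hnorm p t ht]
      have h4 : t^(n p) ≤ W^(n p) := pow_le_pow_left₀ ht.1.le ht.2.le _
      have h5 : (0:ℝ) ≤ t^(α.re-1) * (W - t)^(β.re-1) :=
        le_of_lt (mul_pos (Real.rpow_pos_of_pos ht.1 _)
          (Real.rpow_pos_of_pos (by linarith [ht.2] : (0:ℝ) < W - t) _))
      exact mul_le_mul_of_nonneg_right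
        (mul_le_mul_of_nonneg_left h4 (norm_nonneg _)) h5
    calc (∫ t in Set.Ioo (0:ℝ) W, ‖F p t‖)
        ≤ ∫ t in Set.Ioo (0:ℝ) W, (‖c p‖ * W^(n p)) * (t^(α.re-1) * (W - t)^(β.re-1)) := by
          apply setIntegral_mono_on ((hInt p).norm) (hCBint.const_mul _) measurableSet_Ioo hle
      _ = (‖c p‖ * W^(n p)) * CB := by
          rw [hCB, ← integral_const_mul]
  have hS : Summable (fun p : ℕ × ℕ => ∫ t in Set.Ioo (0:ℝ) W, ‖F p t‖) := by
    refine Summable.of_nonneg_of_le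
      (fun p => integral_nonneg (fun t => norm_nonneg _)) hIb ?_
    simpa [mul_assoc] using hsum.mul_right CB
  -- the swap
  have hswap := MeasureTheory.integral_tsum_of_summable_integral_norm
    (μ := volume.restrict (Set.Ioo (0:ℝ) W)) hInt hS
  have hlhs : ∫ t in Set.Ioo (0:ℝ) W,
      (∑' p : ℕ × ℕ, c p * (t:ℂ)^(n p)) * ((t:ℂ)^(α-1) * (((W:ℝ):ℂ) - t)^(β-1))
      = ∫ t in Set.Ioo (0:ℝ) W, ∑' p : ℕ × ℕ, F p t := by
    refine setIntegral_congr_fun measurableSet_Ioo (fun t ht => ?_)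
    rw [hF, ← tsum_mul_right]
  rw [hlhs, ← hswap]
  -- evaluate each integral
  refine tsum_congr (fun p => ?_)
  have hval : ∫ t in Set.Ioo (0:ℝ) W, F p t
      = c p * (Complex.Gamma (α + (n p:ℂ)) * Complex.Gamma β /
          Complex.Gamma (α + (n p:ℂ) + β) * ((W:ℝ):ℂ)^(α + (n p:ℂ) + β - 1)) := by
    rw [← setIntegral_congr_fun measurableSet_Ioo (fun t ht => hpt p t ht)]
    rw [integral_const_mul]
    congr 1
    exact beta_shift_Ioo (hα' p) hβ hW
  rw [hval]
  have hWne : ((W:ℝ):ℂ) ≠ 0 := Complex.ofReal_ne_zero.mpr hW.ne'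
  have hsplit : ((W:ℝ):ℂ)^(α + (n p:ℂ) + β - 1)
      = ((W:ℝ):ℂ)^(n p) * ((W:ℝ):ℂ)^(α + β - 1) := by
    have he : α + (n p:ℂ) + β - 1 = (n p:ℂ) + (α + β - 1) := by ring
    rw [he, Complex.cpow_add _ _ hWne, Complex.cpow_natCast]
  have hG : α + (n p:ℂ) + β = α + β + (n p:ℂ) := by ring
  rw [hsplit, hG]
  ring

/-- Double Riemann–Liouville fractional integral image of the modified bivariate
H-K Mittag-Leffler function. -/
theorem double_riemannLiouville_integral_mlE4 (κ ρ μ ζ γ1 γ2 γ3 γ4 ϖ1 ϖ2 : ℂ) (Υ : ℕ)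
    (hΥ : 0 < Υ) (hμ : 0 < μ.re) (hζ : 0 < ζ.re) (hκ : 0 < κ.re) (hρ : 0 < ρ.re)
    (A B X Y : ℝ) (hX : A < X) (hY : B < Y) :
    (1 / (Complex.Gamma ζ * Complex.Gamma μ)) *
        (∫ Ω in B..Y, ∫ ε in A..X,
          ((X - ε : ℝ) : ℂ) ^ (μ - 1) * ((Y - Ω : ℝ) : ℂ) ^ (ζ - 1) *
            (((ε - A : ℝ) : ℂ) ^ (κ - 1) * ((Ω - B : ℝ) : ℂ) ^ (ρ - 1) *
              mlE4 κ ρ Υ γ1 γ2 γ3 γ4 (ϖ1 * ((ε : ℂ) - A)) (ϖ2 * ((Ω : ℂ) - B)))) =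
      ((X - A : ℝ) : ℂ) ^ (κ + μ - 1) * ((Y - B : ℝ) : ℂ) ^ (ρ + ζ - 1) *
        mlE4 (κ + μ) (ρ + ζ) Υ γ1 γ2 γ3 γ4 (ϖ1 * ((X : ℂ) - A)) (ϖ2 * ((Y : ℂ) - B)) := by
  have hW : 0 < X - A := sub_pos.mpr hX
  have hV : 0 < Y - B := sub_pos.mpr hY
  set W : ℝ := X - A with hWdef
  set V : ℝ := Y - B with hVdef
  clear_value W V
  have hκμ : 0 < (κ + μ).re := by rw [Complex.add_re]; linarith
  have hρζ : 0 < (ρ + ζ).re := by rw [Complex.add_re]; linarith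
  have hΓμ : Complex.Gamma μ ≠ 0 := by simpa using Gamma_nat_ne_zero hμ 0
  have hΓζ : Complex.Gamma ζ ≠ 0 := by simpa using Gamma_nat_ne_zero hζ 0
  -- STEP 1a: inner change of variables
  have hinner : ∀ Ω : ℝ,
      (∫ ε in A..X, ((X - ε : ℝ) : ℂ) ^ (μ - 1) * ((Y - Ω : ℝ) : ℂ) ^ (ζ - 1) *
            (((ε - A : ℝ) : ℂ) ^ (κ - 1) * ((Ω - B : ℝ) : ℂ) ^ (ρ - 1) *
              mlE4 κ ρ Υ γ1 γ2 γ3 γ4 (ϖ1 * ((ε : ℂ) - A)) (ϖ2 * ((Ω : ℂ) - B))))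
      = ∫ t in Set.Ioo (0:ℝ) W, ((W - t : ℝ) : ℂ) ^ (μ - 1) * ((Y - Ω : ℝ) : ℂ) ^ (ζ - 1) *
            (((t : ℝ) : ℂ) ^ (κ - 1) * ((Ω - B : ℝ) : ℂ) ^ (ρ - 1) *
              mlE4 κ ρ Υ γ1 γ2 γ3 γ4 (ϖ1 * (t : ℂ)) (ϖ2 * ((Ω : ℂ) - B))) := by
    intro Ω
    have h := intervalIntegral.integral_comp_add_left (a := 0) (b := W)
      (fun ε : ℝ => ((X - ε : ℝ) : ℂ) ^ (μ - 1) * ((Y - Ω : ℝ) : ℂ) ^ (ζ - 1) *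
        (((ε - A : ℝ) : ℂ) ^ (κ - 1) * ((Ω - B : ℝ) : ℂ) ^ (ρ - 1) *
          mlE4 κ ρ Υ γ1 γ2 γ3 γ4 (ϖ1 * ((ε : ℂ) - A)) (ϖ2 * ((Ω : ℂ) - B)))) A
    rw [add_zero, show A + W = X by rw [hWdef]; ring] at h
    rw [← h, intervalIntegral.integral_of_le hW.le, MeasureTheory.integral_Ioc_eq_integral_Ioo]
    refine setIntegral_congr_fun measurableSet_Ioo (fun t _ => ?_)
    have e1 : X - (A + t) = W - t := by rw [hWdef]; ring
    have e2 : A + t - A = t := by ring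
    have e3 : ((A + t : ℝ) : ℂ) - (A : ℂ) = (t : ℂ) := by push_cast; ring
    simp only [e1, e2, e3]
  simp only [hinner]
  -- STEP 1b: outer change of variables
  have houter := intervalIntegral.integral_comp_add_left (a := 0) (b := V)
    (fun Ω : ℝ => ∫ t in Set.Ioo (0:ℝ) W, ((W - t : ℝ) : ℂ) ^ (μ - 1) *
        ((Y - Ω : ℝ) : ℂ) ^ (ζ - 1) *
        (((t : ℝ) : ℂ) ^ (κ - 1) * ((Ω - B : ℝ) : ℂ) ^ (ρ - 1) *
          mlE4 κ ρ Υ γ1 γ2 γ3 γ4 (ϖ1 * (t : ℂ)) (ϖ2 * ((Ω : ℂ) - B)))) B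
  rw [add_zero, show B + V = Y by rw [hVdef]; ring] at houter
  rw [← houter, intervalIntegral.integral_of_le hV.le,
    MeasureTheory.integral_Ioc_eq_integral_Ioo]
  have hout2 : ∀ Ω : ℝ, (∫ t in Set.Ioo (0:ℝ) W, ((W - t : ℝ) : ℂ) ^ (μ - 1) *
        ((Y - (B + Ω) : ℝ) : ℂ) ^ (ζ - 1) *
        (((t : ℝ) : ℂ) ^ (κ - 1) * (((B + Ω) - B : ℝ) : ℂ) ^ (ρ - 1) *
          mlE4 κ ρ Υ γ1 γ2 γ3 γ4 (ϖ1 * (t : ℂ)) (ϖ2 * (((B + Ω : ℝ) : ℂ) - B))))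
      = ∫ t in Set.Ioo (0:ℝ) W, ((W - t : ℝ) : ℂ) ^ (μ - 1) *
        ((V - Ω : ℝ) : ℂ) ^ (ζ - 1) *
        (((t : ℝ) : ℂ) ^ (κ - 1) * ((Ω : ℝ) : ℂ) ^ (ρ - 1) *
          mlE4 κ ρ Υ γ1 γ2 γ3 γ4 (ϖ1 * (t : ℂ)) (ϖ2 * ((Ω : ℝ) : ℂ))) := by
    intro Ω
    have e1 : Y - (B + Ω) = V - Ω := by rw [hVdef]; ring
    have e2 : B + Ω - B = Ω := by ring
    have e3 : ((B + Ω : ℝ) : ℂ) - (B : ℂ) = ((Ω : ℝ) : ℂ) := by push_cast; ring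
    simp only [e1, e2, e3]
  simp only [hout2]
  -- STEP 2: series form of the inner integrand
  set cin : ℝ → ℕ × ℕ → ℂ := fun Ω p =>
    mlCoef κ ρ Υ γ1 γ2 γ3 γ4 p * ϖ1 ^ p.1 *
      ((ϖ2 * ((Ω : ℝ) : ℂ)) ^ (Υ * p.2) *
        (((Ω : ℝ) : ℂ) ^ (ρ - 1) * ((V - Ω : ℝ) : ℂ) ^ (ζ - 1))) with hcin
  set cout : ℕ × ℕ → ℂ := fun p =>
    mlCoef (κ+μ) ρ Υ γ1 γ2 γ3 γ4 p *
      (ϖ1 ^ p.1 * ((W : ℝ) : ℂ) ^ p.1 * ϖ2 ^ (Υ * p.2)) with hcout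
  have hrw1 : ∀ (Ω : ℝ) (t : ℝ),
      ((W - t : ℝ) : ℂ) ^ (μ - 1) * ((V - Ω : ℝ) : ℂ) ^ (ζ - 1) *
          (((t : ℝ) : ℂ) ^ (κ - 1) * ((Ω : ℝ) : ℂ) ^ (ρ - 1) *
            mlE4 κ ρ Υ γ1 γ2 γ3 γ4 (ϖ1 * (t : ℂ)) (ϖ2 * ((Ω : ℝ) : ℂ)))
        = (∑' p : ℕ × ℕ, cin Ω p * (t : ℂ) ^ p.1) *
            (((t : ℝ) : ℂ) ^ (κ - 1) * (((W : ℝ) : ℂ) - (t : ℂ)) ^ (μ - 1)) := by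
    intro Ω t
    have ecast : ((W - t : ℝ) : ℂ) = ((W : ℝ) : ℂ) - (t : ℂ) := by push_cast; ring
    rw [ecast, mlE4_eq_tsum κ ρ Υ hΥ γ1 γ2 γ3 γ4 hκ hρ]
    have hL : (((W : ℝ) : ℂ) - (t : ℂ)) ^ (μ - 1) * ((V - Ω : ℝ) : ℂ) ^ (ζ - 1) *
          (((t : ℝ) : ℂ) ^ (κ - 1) * ((Ω : ℝ) : ℂ) ^ (ρ - 1) *
            (∑' p : ℕ × ℕ, mlCoef κ ρ Υ γ1 γ2 γ3 γ4 p * (ϖ1 * (t : ℂ)) ^ p.1 *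
              (ϖ2 * ((Ω : ℝ) : ℂ)) ^ (Υ * p.2)))
        = ∑' p : ℕ × ℕ, (mlCoef κ ρ Υ γ1 γ2 γ3 γ4 p * (ϖ1 * (t : ℂ)) ^ p.1 *
              (ϖ2 * ((Ω : ℝ) : ℂ)) ^ (Υ * p.2)) *
            ((((W : ℝ) : ℂ) - (t : ℂ)) ^ (μ - 1) * ((V - Ω : ℝ) : ℂ) ^ (ζ - 1) *
              (((t : ℝ) : ℂ) ^ (κ - 1) * ((Ω : ℝ) : ℂ) ^ (ρ - 1))) := by
      rw [tsum_mul_right]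
      ring
    rw [hL, ← tsum_mul_right]
    refine tsum_congr (fun p => ?_)
    simp only [hcin]
    ring
  -- STEP 3: summability for the inner swap
  have hsum1 : ∀ Ω ∈ Set.Ioo (0:ℝ) V,
      Summable (fun p : ℕ × ℕ => ‖cin Ω p‖ * W ^ p.1) := by
    intro Ω hΩ
    set CΩ : ℝ := ‖((Ω : ℝ) : ℂ) ^ (ρ - 1)‖ * ‖((V - Ω : ℝ) : ℂ) ^ (ζ - 1)‖ with hCΩ
    refine Summable.of_nonneg_of_le (fun p => by positivity) ?_
      ((mlCoef_summable κ ρ Υ hΥ γ1 γ2 γ3 γ4 hκ hρ (‖ϖ1‖*W) ((‖ϖ2‖*V)^Υ)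
        (by positivity) (by positivity)).mul_left CΩ)
    rintro ⟨s, r⟩
    show ‖cin Ω (s,r)‖ * W ^ s
      ≤ CΩ * (‖mlCoef κ ρ Υ γ1 γ2 γ3 γ4 (s,r)‖ * (‖ϖ1‖*W)^s * ((‖ϖ2‖*V)^Υ)^r)
    have hb : ‖ϖ2 * ((Ω : ℝ) : ℂ)‖ ≤ ‖ϖ2‖ * V := by
      rw [norm_mul, Complex.norm_real, Real.norm_of_nonneg hΩ.1.le]
      exact mul_le_mul_of_nonneg_left hΩ.2.le (norm_nonneg _)
    calc ‖cin Ω (s,r)‖ * W ^ s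
        = ‖ϖ2 * ((Ω : ℝ) : ℂ)‖ ^ (Υ*r) *
            (CΩ * (‖mlCoef κ ρ Υ γ1 γ2 γ3 γ4 (s,r)‖ * (‖ϖ1‖^s * W^s))) := by
          simp only [hcin, hCΩ, norm_mul, norm_pow]
          ring
      _ ≤ (‖ϖ2‖ * V) ^ (Υ*r) *
            (CΩ * (‖mlCoef κ ρ Υ γ1 γ2 γ3 γ4 (s,r)‖ * (‖ϖ1‖^s * W^s))) := by
          refine mul_le_mul_of_nonneg_right (pow_le_pow_left₀ (norm_nonneg _) hb _) ?_
          positivity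
      _ = CΩ * (‖mlCoef κ ρ Υ γ1 γ2 γ3 γ4 (s,r)‖ * (‖ϖ1‖*W)^s * ((‖ϖ2‖*V)^Υ)^r) := by
          rw [pow_mul, mul_pow]
          ring
  -- STEP 4: inner integral evaluated
  have hkey1 : ∀ Ω ∈ Set.Ioo (0:ℝ) V,
      (∫ t in Set.Ioo (0:ℝ) W, ((W - t : ℝ) : ℂ) ^ (μ - 1) * ((V - Ω : ℝ) : ℂ) ^ (ζ - 1) *
          (((t : ℝ) : ℂ) ^ (κ - 1) * ((Ω : ℝ) : ℂ) ^ (ρ - 1) *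
            mlE4 κ ρ Υ γ1 γ2 γ3 γ4 (ϖ1 * (t : ℂ)) (ϖ2 * ((Ω : ℝ) : ℂ))))
        = Complex.Gamma μ * ((W : ℝ) : ℂ) ^ (κ + μ - 1) *
            ((∑' p : ℕ × ℕ, cout p * ((Ω : ℝ) : ℂ) ^ (Υ * p.2)) *
              (((Ω : ℝ) : ℂ) ^ (ρ - 1) * (((V : ℝ) : ℂ) - ((Ω : ℝ) : ℂ)) ^ (ζ - 1))) := by
    intro Ω hΩ
    rw [setIntegral_congr_fun measurableSet_Ioo (fun t _ => hrw1 Ω t)]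
    rw [key_swap κ μ hκ hμ hW (fun p => p.1) (cin Ω) (hsum1 Ω hΩ)]
    have ecast2 : ((V - Ω : ℝ) : ℂ) = ((V : ℝ) : ℂ) - ((Ω : ℝ) : ℂ) := by push_cast; ring
    calc ∑' p : ℕ × ℕ, cin Ω p * ((W : ℝ) : ℂ) ^ p.1 *
            (Complex.Gamma (κ + (p.1:ℂ)) * Complex.Gamma μ /
              Complex.Gamma (κ + μ + (p.1:ℂ)) * ((W : ℝ) : ℂ) ^ (κ + μ - 1))
        = ∑' p : ℕ × ℕ, Complex.Gamma μ * ((W : ℝ) : ℂ) ^ (κ + μ - 1) *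
            (cout p * ((Ω : ℝ) : ℂ) ^ (Υ * p.2) *
              (((Ω : ℝ) : ℂ) ^ (ρ - 1) * (((V : ℝ) : ℂ) - ((Ω : ℝ) : ℂ)) ^ (ζ - 1))) := by
          refine tsum_congr (fun p => ?_)
          have hsh := mlCoef_shift_fst κ ρ μ Υ γ1 γ2 γ3 γ4 hκ hρ hκμ p
          simp only [hcin, hcout]
          rw [ecast2, ← hsh]
          ring
      _ = Complex.Gamma μ * ((W : ℝ) : ℂ) ^ (κ + μ - 1) *
            ((∑' p : ℕ × ℕ, cout p * ((Ω : ℝ) : ℂ) ^ (Υ * p.2)) *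
              (((Ω : ℝ) : ℂ) ^ (ρ - 1) * (((V : ℝ) : ℂ) - ((Ω : ℝ) : ℂ)) ^ (ζ - 1))) := by
          rw [tsum_mul_left]
          congr 1
          rw [tsum_mul_right]
  rw [setIntegral_congr_fun measurableSet_Ioo (fun Ω hΩ => hkey1 Ω hΩ)]
  rw [MeasureTheory.integral_const_mul]
  -- STEP 5: outer swap
  have hsum2 : Summable (fun p : ℕ × ℕ => ‖cout p‖ * V ^ (Υ * p.2)) := by
    refine ((mlCoef_summable (κ+μ) ρ Υ hΥ γ1 γ2 γ3 γ4 hκμ hρ (‖ϖ1‖*W) ((‖ϖ2‖*V)^Υ)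
        (by positivity) (by positivity)).congr (fun p => ?_))
    have hWn : ‖((W : ℝ) : ℂ) ^ p.1‖ = W ^ p.1 := by
      rw [norm_pow, Complex.norm_real, Real.norm_of_nonneg hW.le]
    simp only [hcout, norm_mul, norm_pow, hWn]
    rw [mul_pow, pow_mul, mul_pow]
    ring
  rw [key_swap ρ ζ hρ hζ hV (fun p => Υ * p.2) cout hsum2]
  -- STEP 6: final assembly
  have hXA : (X : ℂ) - (A : ℂ) = ((W : ℝ) : ℂ) := by rw [hWdef]; push_cast; ring
  have hYB : (Y : ℂ) - (B : ℂ) = ((V : ℝ) : ℂ) := by rw [hVdef]; push_cast; ring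
  rw [hXA, hYB, mlE4_eq_tsum (κ+μ) (ρ+ζ) Υ hΥ γ1 γ2 γ3 γ4 hκμ hρζ]
  rw [← tsum_mul_left, ← tsum_mul_left, ← tsum_mul_left]
  refine tsum_congr (fun p => ?_)
  have hone : 1 / (Complex.Gamma ζ * Complex.Gamma μ) *
      (Complex.Gamma μ * Complex.Gamma ζ) = 1 := by
    field_simp
  have hc2 : ((Υ * p.2 : ℕ) : ℂ) = (Υ : ℂ) * p.2 := by push_cast; ring
  rw [hc2]
  have hsh2 := mlCoef_shift_snd (κ+μ) ρ ζ Υ γ1 γ2 γ3 γ4 hκμ hρ hρζ p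
  calc 1 / (Complex.Gamma ζ * Complex.Gamma μ) *
        (Complex.Gamma μ * ((W : ℝ) : ℂ) ^ (κ + μ - 1) *
          (cout p * ((V : ℝ) : ℂ) ^ (Υ * p.2) *
            (Complex.Gamma (ρ + (Υ:ℂ) * p.2) * Complex.Gamma ζ /
              Complex.Gamma (ρ + ζ + (Υ:ℂ) * p.2) * ((V : ℝ) : ℂ) ^ (ρ + ζ - 1))))
      = (mlCoef (κ+μ) ρ Υ γ1 γ2 γ3 γ4 p *
          (Complex.Gamma (ρ + (Υ:ℂ) * p.2) / Complex.Gamma (ρ + ζ + (Υ:ℂ) * p.2))) *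
          ((1 / (Complex.Gamma ζ * Complex.Gamma μ) *
            (Complex.Gamma μ * Complex.Gamma ζ)) *
           (((W : ℝ) : ℂ) ^ (κ + μ - 1) * (((V : ℝ) : ℂ) ^ (ρ + ζ - 1) *
            (ϖ1 ^ p.1 * ((W : ℝ) : ℂ) ^ p.1 *
              (ϖ2 ^ (Υ * p.2) * ((V : ℝ) : ℂ) ^ (Υ * p.2)))))) := by
        simp only [hcout]
        ring
    _ = ((W : ℝ) : ℂ) ^ (κ + μ - 1) * ((V : ℝ) : ℂ) ^ (ρ + ζ - 1) *
          (mlCoef (κ+μ) (ρ+ζ) Υ γ1 γ2 γ3 γ4 p * (ϖ1 * ((W : ℝ) : ℂ)) ^ p.1 *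
            (ϖ2 * ((V : ℝ) : ℂ)) ^ (Υ * p.2)) := by
        rw [hsh2, hone]
        rw [mul_pow, mul_pow]
        ring
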